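/- Let a > 0, δ ∈ ℝ with δ(δ − a) = n for some n ∈ ℕ, and let F(x, ξ) = e^{−δx}·e^{−ξ²/2}·e^{ξδ}·H_n((ξ − 2δ)/√2). Then F satisfies the degenerate PDE (ξ − a)·F_x = F_ξξ + (ξF)_ξ on ℝ². -/

import Mathlib

open Real

/-- the eigenmodes F(x,ξ) = e^{-δx} e^{-ξ²/2} e^{ξδ} H_n((ξ-2δ)/√2)
solve the degenerate PDE (ξ - a)F_x = F_ξξ + (ξF)_ξ when δ(δ - a) = n.  H is the
n-th physicists' Hermite polynomial, characterized by H'' - 2yH' + 2nH = 0. -/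
theorem eigenmode_solves_outer_pde
    (n : ℕ) (a δ : ℝ) (ha : 0 < a) (H H' H'' : ℝ → ℝ)
    (hH' : ∀ y : ℝ, HasDerivAt H (H' y) y)
    (hH'' : ∀ y : ℝ, HasDerivAt H' (H'' y) y)
    (hHermite : ∀ y : ℝ, H'' y - 2 * y * H' y + 2 * n * H y = 0)
    (hδ : δ * (δ - a) = n) :
    let F : ℝ → ℝ → ℝ := fun x ξ =>
      Real.exp (-δ * x) * Real.exp (-ξ ^ 2 / 2) * Real.exp (ξ * δ) *
        H ((ξ - 2 * δ) / Real.sqrt 2)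
    ∀ x ξ : ℝ,
      (ξ - a) * deriv (fun t => F t ξ) x =
        deriv (deriv (fun s => F x s)) ξ + deriv (fun s => s * F x s) ξ := by
  intro F x ξ
  have hs2sq : Real.sqrt 2 ^ 2 = 2 := Real.sq_sqrt (by norm_num)
  have hs2ne : Real.sqrt 2 ≠ 0 := by positivity
  set s2 : ℝ := Real.sqrt 2 with hs2
  set E : ℝ → ℝ := fun s => Real.exp (-s ^ 2 / 2) * Real.exp (s * δ) with hE
  set u : ℝ → ℝ := fun s => (s - 2 * δ) / s2 with hu
  -- derivative of E
  have hEd : ∀ s : ℝ, HasDerivAt E ((δ - s) * E s) s := by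
    intro s
    have h0 : HasDerivAt (fun s : ℝ => -s ^ 2 / 2) (-s) s := by
      have := ((hasDerivAt_pow 2 s).neg).div_const 2
      refine this.congr_deriv ?_
      simp only [Nat.reduceSub, Nat.cast_ofNat, pow_one]; ring
    have h1 := h0.exp
    have h2 : HasDerivAt (fun s : ℝ => s * δ) δ s := by
      simpa using (hasDerivAt_id s).mul_const δ
    have h3 := h2.exp
    have := h1.mul h3
    refine this.congr_deriv ?_
    simp only [hE]; ring
  -- derivative of the inner argument
  have hud : ∀ s : ℝ, HasDerivAt u (1 / s2) s := by
    intro s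
    have := ((hasDerivAt_id s).sub_const (2 * δ)).div_const s2
    simpa using this
  have hHu : ∀ s : ℝ, HasDerivAt (fun s => H (u s)) (H' (u s) * (1 / s2)) s :=
    fun s => (hH' (u s)).comp s (hud s)
  have hH'u : ∀ s : ℝ, HasDerivAt (fun s => H' (u s)) (H'' (u s) * (1 / s2)) s :=
    fun s => (hH'' (u s)).comp s (hud s)
  -- first ξ-derivative of φ := E * H∘u
  set Dφ : ℝ → ℝ := fun s =>
    (δ - s) * E s * H (u s) + E s * (H' (u s) * (1 / s2)) with hDφdef
  have hφd : ∀ s : ℝ, HasDerivAt (fun s => E s * H (u s)) (Dφ s) s := by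
    intro s
    have := (hEd s).mul (hHu s)
    exact this
  -- second derivative (derivative of Dφ) at any point
  set D2 : ℝ → ℝ := fun s =>
    ((-1) * E s + (δ - s) * ((δ - s) * E s)) * H (u s)
      + ((δ - s) * E s) * (H' (u s) * (1 / s2))
      + ((δ - s) * E s * (H' (u s) * (1 / s2))
        + E s * (H'' (u s) * (1 / s2) * (1 / s2))) with hD2def
  have hDφd : ∀ s : ℝ, HasDerivAt Dφ (D2 s) s := by
    intro s
    have hA : HasDerivAt (fun s : ℝ => (δ - s) * E s)
        ((-1) * E s + (δ - s) * ((δ - s) * E s)) s := by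
      have h4 : HasDerivAt (fun s : ℝ => δ - s) (-1) s := by
        exact ((hasDerivAt_const s δ).sub (hasDerivAt_id s)).congr_deriv (by norm_num)
      exact h4.mul (hEd s)
    have hB := hA.mul (hHu s)
    have hC : HasDerivAt (fun s : ℝ => H' (u s) * (1 / s2))
        (H'' (u s) * (1 / s2) * (1 / s2)) s := (hH'u s).mul_const _
    have hD := (hEd s).mul hC
    have := hB.add hD
    exact this
  set c : ℝ := Real.exp (-δ * x) with hc
  have hFx : (fun s => F x s) = fun s => c * (E s * H (u s)) := by
    funext s; simp only [F, hE, hu, hc]; ring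
  -- first deriv in ξ as a function
  have hd1 : deriv (fun s => F x s) = fun s => c * Dφ s := by
    funext s
    rw [hFx]
    exact ((hφd s).const_mul c).deriv
  -- second deriv at ξ
  have hd2 : deriv (deriv (fun s => F x s)) ξ = c * D2 ξ := by
    rw [hd1]
    exact ((hDφd ξ).const_mul c).deriv
  -- transport-term deriv
  have hd3 : deriv (fun s => s * F x s) ξ
      = 1 * (c * (E ξ * H (u ξ))) + ξ * (c * Dφ ξ) := by
    have hfun : (fun s => s * F x s) = fun s => s * (c * (E s * H (u s))) := by
      funext s; simp only [F, hE, hu, hc]; ring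
    rw [hfun]
    exact ((hasDerivAt_id ξ).mul ((hφd ξ).const_mul c)).deriv
  -- x-derivative
  have hd0 : deriv (fun t => F t ξ) x = -δ * (c * (E ξ * H (u ξ))) := by
    have hfun : (fun t => F t ξ)
        = fun t => Real.exp (-δ * t) * (E ξ * H (u ξ)) := by
      funext t; simp only [F, hE, hu]; ring
    rw [hfun]
    have h5 : HasDerivAt (fun t : ℝ => Real.exp (-δ * t)) (c * (-δ)) x := by
      have h6 : HasDerivAt (fun t : ℝ => -δ * t) (-δ) x := by
        simpa using (hasDerivAt_id x).const_mul (-δ)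
      simpa [hc] using h6.exp
    have := h5.mul_const (E ξ * H (u ξ))
    rw [this.deriv]; ring
  rw [hd0, hd2, hd3]
  -- now pure algebra
  have hH2 : H'' (u ξ) = 2 * (u ξ) * H' (u ξ) - 2 * n * H (u ξ) := by
    have := hHermite (u ξ); linarith
  have huξ : u ξ * s2 = ξ - 2 * δ := by
    simp only [hu]; field_simp
  have h2 : s2 * s2 = 2 := by nlinarith [hs2sq]
  have h12 : (1 / s2) * (1 / s2) = 1 / 2 := by
    rw [div_mul_div_comm, one_mul, h2]
  simp only [hDφdef, hD2def, hH2]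
  simp only [hu]
  linear_combination
    (c * E ξ * (2 * ((ξ - 2 * δ) / s2) * H' ((ξ - 2 * δ) / s2)
      - 2 * (n : ℝ) * H ((ξ - 2 * δ) / s2))) * h12
    + ((8 * δ - 4 * ξ) * (c * E ξ) * H' ((ξ - 2 * δ) / s2) * (1 / s2)
      + 4 * (n : ℝ) * (c * E ξ) * H ((ξ - 2 * δ) / s2)) * h12
    - c * E ξ * H ((ξ - 2 * δ) / s2) * hδ
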